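/- Let E ⊂ X be a closed set, z ∈ E, r > 0, and let F be the truncated set obtained from E, z, r by the truncation construction. Let m ∈ ℕ₀ and x ∈ X be such that dist(x,F) < 2^{−m+1} r, and write r_m = 2^{−m−1} r. Then there exists a point y ∈ E such that B(y, r_m) ⊂ B(x, 8 r_m) and E ∩ closedBall(y, r_m/2) = F ∩ closedBall(y, r_m/2). -/
import Mathlib


open Metric MeasureTheory Set
open scoped ENNReal NNReal

/-- The effective diameter bound: `diam E`, unless `diam E = 0`, in which case `diam X`. -/
noncomputable def diamBound {X : Type*} [PseudoEMetricSpace X] (E : Set X) : ℝ≥0∞ :=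
  haveI := Classical.propDecidable
  if EMetric.diam E = 0 then EMetric.diam (Set.univ : Set X) else EMetric.diam E

/-- The truncation sequence: `F₀ = E ∩ closedBall z (r/2)` and recursively
`F_{j+1} = ⋃_{x ∈ F_j} E ∩ closedBall x (r / 2^(j+2))`. -/
def truncSeq {X : Type*} [MetricSpace X] (E : Set X) (z : X) (r : ℝ) : ℕ → Set X
  | 0 => E ∩ closedBall z (r / 2)
  | j + 1 => ⋃ x ∈ truncSeq E z r j, E ∩ closedBall x (r / 2 ^ (j + 2))

/-- The truncated set `F`, the closure of the union of the truncation sequence. -/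
def truncSet {X : Type*} [MetricSpace X] (E : Set X) (z : X) (r : ℝ) : Set X :=
  closure (⋃ j : ℕ, truncSeq E z r j)

/-- Near the truncated set `F`, at scale `r_m = 2^{-m-1} r`, there is a point `y ∈ E`
with `B(y, r_m) ⊆ B(x, 8 r_m)` such that `E` and `F` coincide on `closedBall y (r_m/2)`. -/
lemma truncSeq_subset {X : Type*} [MetricSpace X] (E : Set X) (z : X) (r : ℝ) :
    ∀ j, truncSeq E z r j ⊆ E
  | 0 => inter_subset_left
  | j + 1 => by
    simp only [truncSeq]
    exact iUnion₂_subset fun x _ => inter_subset_left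

lemma truncSet_subset {X : Type*} [MetricSpace X] {E : Set X} (hE : IsClosed E) (z : X) (r : ℝ) :
    truncSet E z r ⊆ E :=
  hE.closure_subset_iff.mpr (iUnion_subset fun j => truncSeq_subset E z r j)

lemma truncSeq_approx {X : Type*} [MetricSpace X] (E : Set X) (z : X) {r : ℝ} (hr : 0 < r)
    (m : ℕ) : ∀ k, ∀ y ∈ truncSeq E z r (m + k),
      ∃ y' ∈ truncSeq E z r m, dist y y' ≤ r / 2 ^ (m + 1) - r / 2 ^ (m + 1 + k)
  | 0 => fun y hy => ⟨y, hy, by simp⟩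
  | k + 1 => fun y hy => by
    rw [show m + (k + 1) = (m + k) + 1 from rfl] at hy
    simp only [truncSeq, mem_iUnion₂] at hy
    obtain ⟨p, hp, hyE, hyd⟩ := hy
    obtain ⟨y', hy', hd⟩ := truncSeq_approx E z hr m k p hp
    refine ⟨y', hy', ?_⟩
    rw [mem_closedBall] at hyd
    have h1 : (2:ℝ) ^ (m + 1 + k) = 2 ^ (m + 1) * 2 ^ k := pow_add 2 (m+1) k
    have h2 : (2:ℝ) ^ (m + k + 2) = 2 ^ (m + 1) * (2 ^ k * 2) := by
      rw [show m + k + 2 = (m + 1) + (k + 1) from by omega, pow_add, pow_add]; ring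
    have h3 : (2:ℝ) ^ (m + 1 + (k + 1)) = 2 ^ (m + 1) * (2 ^ k * 2) := by
      rw [pow_add, pow_add]; ring
    have hpos : (0:ℝ) < 2 ^ (m + 1) := by positivity
    have hpos2 : (0:ℝ) < 2 ^ k := by positivity
    calc dist y y' ≤ dist y p + dist p y' := dist_triangle _ _ _
      _ ≤ r / 2 ^ (m + k + 2) + (r / 2 ^ (m + 1) - r / 2 ^ (m + 1 + k)) := by linarith
      _ ≤ r / 2 ^ (m + 1) - r / 2 ^ (m + 1 + (k + 1)) := by
          rw [h1, h2, h3]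
          rw [div_mul_eq_div_div, div_mul_eq_div_div, div_mul_eq_div_div]
          set A := r / 2 ^ (m + 1) / 2 ^ k with hA
          have : 0 ≤ A := by positivity
          linarith

theorem truncSet_big_pieces {X : Type*} [MetricSpace X] [MeasurableSpace X] [BorelSpace X]
    [Nontrivial X]
    (μ : Measure X) (c_μ : ℝ) (hc : 1 < c_μ)
    (hball : ∀ (x : X) (ρ : ℝ), 0 < ρ → 0 < μ (ball x ρ) ∧ μ (ball x ρ) < ⊤)
    (hdoubling : ∀ (x : X) (ρ : ℝ), 0 < ρ →
      μ (ball x (2 * ρ)) ≤ ENNReal.ofReal c_μ * μ (ball x ρ))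
    (E : Set X) (hE : IsClosed E) (z : X) (hz : z ∈ E) (r : ℝ) (hr : 0 < r)
    (m : ℕ) (x : X)
    (hx : infDist x (truncSet E z r) < 2 * r / 2 ^ m) :
    ∃ y ∈ E, ball y (r / 2 ^ (m + 1)) ⊆ ball x (8 * (r / 2 ^ (m + 1))) ∧
      E ∩ closedBall y (r / 2 ^ (m + 1) / 2) =
        truncSet E z r ∩ closedBall y (r / 2 ^ (m + 1) / 2) := by
  set rm : ℝ := r / 2 ^ (m + 1) with hrm
  have hrmpos : 0 < rm := by positivity
  -- z belongs to F
  have hz0 : z ∈ truncSeq E z r 0 := ⟨hz, by simp [le_of_lt (by positivity : (0:ℝ) < r / 2)]⟩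
  have hFne : (truncSet E z r).Nonempty :=
    ⟨z, subset_closure (mem_iUnion.mpr ⟨0, hz0⟩)⟩
  -- pick w in F close to x
  have h4 : 2 * r / 2 ^ m = 4 * rm := by
    rw [hrm, pow_succ]; ring
  rw [h4] at hx
  obtain ⟨w, hwF, hdw⟩ := (infDist_lt_iff hFne).mp hx
  -- pick w' in the union close to w
  obtain ⟨w', hw'U, hdww'⟩ := Metric.mem_closure_iff.mp hwF rm hrmpos
  obtain ⟨j, hw'⟩ := mem_iUnion.mp hw'U
  -- get i ≤ m and y ∈ F_i with dist w' y ≤ rm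
  obtain ⟨i, him, y, hyFi, hdy⟩ :
      ∃ i ≤ m, ∃ y ∈ truncSeq E z r i, dist w' y ≤ rm := by
    rcases le_or_gt j m with hjm | hmj
    · exact ⟨j, hjm, w', hw', by simp [le_of_lt hrmpos]⟩
    · obtain ⟨k, hk⟩ := Nat.exists_eq_add_of_le hmj.le
      rw [hk] at hw'
      obtain ⟨y, hy, hd⟩ := truncSeq_approx E z hr m k w' hw'
      refine ⟨m, le_refl m, y, hy, hd.trans ?_⟩
      have : 0 ≤ r / 2 ^ (m + 1 + k) := by positivity
      linarith
  have hyE : y ∈ E := truncSeq_subset E z r i hyFi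
  have hdxy : dist x y < 6 * rm :=
    calc dist x y ≤ dist x w + dist w w' + dist w' y := dist_triangle4 _ _ _ _
      _ < 4 * rm + rm + rm := by linarith
      _ = 6 * rm := by ring
  refine ⟨y, hyE, ?_, ?_⟩
  · intro u hu
    rw [mem_ball] at hu ⊢
    have := dist_triangle u y x
    rw [dist_comm y x] at this
    linarith
  · apply Subset.antisymm
    · rintro u ⟨huE, hud⟩
      refine ⟨?_, hud⟩
      have hball : u ∈ closedBall y (r / 2 ^ (i + 2)) := by
        rw [mem_closedBall] at hud ⊢
        refine hud.trans ?_
        have : rm / 2 = r / 2 ^ (m + 2) := by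
          rw [hrm, div_div, ← pow_succ]
        rw [this]
        apply div_le_div_of_nonneg_left hr.le (by positivity)
        exact pow_le_pow_right₀ (by norm_num) (by omega)
      have : u ∈ truncSeq E z r (i + 1) :=
        mem_iUnion₂.mpr ⟨y, hyFi, huE, hball⟩
      exact subset_closure (mem_iUnion.mpr ⟨i + 1, this⟩)
    · rintro u ⟨huF, hud⟩
      exact ⟨truncSet_subset hE z r huF, hud⟩
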